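/- arXiv:1205.6123 — 2 statements merged into one kernel-verified Lean document; each statement's English description precedes it below -/
import Mathlib

section
/- The union of two interval-valued fuzzy graphs is an interval-valued fuzzy graph. That is, if G1=(A1,B1) and G2=(A2,B2) are interval-valued fuzzy graphs of G1*=(V1,E1) and G2*=(V2,E2), then (A1∪A2, B1∪B2) is an interval-valued fuzzy graph of G1*∪G2*=(V1∪V2, E1∪E2). -/
open scoped Classical

/-- `(A,B)` is an interval-valued fuzzy graph of the crisp graph `G` with vertex set `Vs`. -/
def IsIVFG {V : Type*} (Vs : Set V) (G : SimpleGraph V) (am ap : V → ℝ)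
    (bm bp : V → V → ℝ) : Prop :=
  (∀ x ∈ Vs, 0 ≤ am x ∧ am x ≤ ap x ∧ ap x ≤ 1) ∧
  (∀ x y, G.Adj x y →
    0 ≤ bm x y ∧ bm x y ≤ bp x y ∧
    bm x y ≤ min (am x) (am y) ∧ bp x y ≤ min (ap x) (ap y))

/-- The union of two interval-valued fuzzy graphs is an interval-valued fuzzy graph
of the union of the crisp graphs. -/
theorem ivfg_union {V : Type*} (V1 V2 : Set V) (G1 G2 : SimpleGraph V)
    (am1 ap1 am2 ap2 : V → ℝ) (bm1 bp1 bm2 bp2 : V → V → ℝ)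
    (hV1 : ∀ x y, G1.Adj x y → x ∈ V1 ∧ y ∈ V1)
    (hV2 : ∀ x y, G2.Adj x y → x ∈ V2 ∧ y ∈ V2)
    (h1 : IsIVFG V1 G1 am1 ap1 bm1 bp1) (h2 : IsIVFG V2 G2 am2 ap2 bm2 bp2) :
    IsIVFG (V1 ∪ V2) (G1 ⊔ G2)
      (fun x => if x ∈ V1 then (if x ∈ V2 then max (am1 x) (am2 x) else am1 x) else am2 x)
      (fun x => if x ∈ V1 then (if x ∈ V2 then max (ap1 x) (ap2 x) else ap1 x) else ap2 x)
      (fun x y => if G1.Adj x y then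
          (if G2.Adj x y then max (bm1 x y) (bm2 x y) else bm1 x y) else bm2 x y)
      (fun x y => if G1.Adj x y then
          (if G2.Adj x y then max (bp1 x y) (bp2 x y) else bp1 x y) else bp2 x y) := by
  obtain ⟨h1v, h1e⟩ := h1
  obtain ⟨h2v, h2e⟩ := h2
  have am1le : ∀ x, x ∈ V1 → am1 x ≤
      (if x ∈ V1 then (if x ∈ V2 then max (am1 x) (am2 x) else am1 x) else am2 x) := by
    intro x hx; simp only [hx, if_true]; split <;> simp
  have am2le : ∀ x, x ∈ V2 → am2 x ≤
      (if x ∈ V1 then (if x ∈ V2 then max (am1 x) (am2 x) else am1 x) else am2 x) := by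
    intro x hx; by_cases h : x ∈ V1 <;> simp [h, hx]
  have ap1le : ∀ x, x ∈ V1 → ap1 x ≤
      (if x ∈ V1 then (if x ∈ V2 then max (ap1 x) (ap2 x) else ap1 x) else ap2 x) := by
    intro x hx; simp only [hx, if_true]; split <;> simp
  have ap2le : ∀ x, x ∈ V2 → ap2 x ≤
      (if x ∈ V1 then (if x ∈ V2 then max (ap1 x) (ap2 x) else ap1 x) else ap2 x) := by
    intro x hx; by_cases h : x ∈ V1 <;> simp [h, hx]
  constructor
  · intro x hx
    rcases hx with hx | hx
    · have h1x := h1v x hx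
      by_cases h2x : x ∈ V2
      · have h2x' := h2v x h2x
        simp only [hx, h2x, if_true]
        refine ⟨le_max_of_le_left h1x.1, max_le_max h1x.2.1 h2x'.2.1,
          max_le h1x.2.2 h2x'.2.2⟩
      · simp only [hx, h2x, if_true, if_false]
        exact h1x
    · have h2x := h2v x hx
      by_cases h1x : x ∈ V1
      · have h1x' := h1v x h1x
        simp only [hx, h1x, if_true]
        refine ⟨le_max_of_le_right h2x.1, max_le_max h1x'.2.1 h2x.2.1,
          max_le h1x'.2.2 h2x.2.2⟩
      · simp only [hx, h1x, if_false]
        exact h2x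
  · intro x y hxy
    rcases hxy with hxy | hxy
    all_goals simp only
    · obtain ⟨hx1, hy1⟩ := hV1 x y hxy
      obtain ⟨hb0, hbmp, hbm, hbp⟩ := h1e x y hxy
      by_cases h2xy : G2.Adj x y
      · obtain ⟨hx2, hy2⟩ := hV2 x y h2xy
        obtain ⟨hb0', hbmp', hbm', hbp'⟩ := h2e x y h2xy
        simp only [hxy, h2xy, if_true]
        refine ⟨le_max_of_le_left hb0, max_le_max hbmp hbmp', ?_, ?_⟩
        · exact max_le
            (le_min ((le_min_iff.1 hbm).1.trans (am1le x hx1))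
              ((le_min_iff.1 hbm).2.trans (am1le y hy1)))
            (le_min ((le_min_iff.1 hbm').1.trans (am2le x hx2))
              ((le_min_iff.1 hbm').2.trans (am2le y hy2)))
        · exact max_le
            (le_min ((le_min_iff.1 hbp).1.trans (ap1le x hx1))
              ((le_min_iff.1 hbp).2.trans (ap1le y hy1)))
            (le_min ((le_min_iff.1 hbp').1.trans (ap2le x hx2))
              ((le_min_iff.1 hbp').2.trans (ap2le y hy2)))
      · simp only [hxy, h2xy, if_true, if_false]
        refine ⟨hb0, hbmp, ?_, ?_⟩
        · exact le_min ((le_min_iff.1 hbm).1.trans (am1le x hx1))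
            ((le_min_iff.1 hbm).2.trans (am1le y hy1))
        · exact le_min ((le_min_iff.1 hbp).1.trans (ap1le x hx1))
            ((le_min_iff.1 hbp).2.trans (ap1le y hy1))
    · obtain ⟨hx2, hy2⟩ := hV2 x y hxy
      obtain ⟨hb0, hbmp, hbm, hbp⟩ := h2e x y hxy
      by_cases h1xy : G1.Adj x y
      · obtain ⟨hx1, hy1⟩ := hV1 x y h1xy
        obtain ⟨hb0', hbmp', hbm', hbp'⟩ := h1e x y h1xy
        simp only [hxy, h1xy, if_true]
        refine ⟨le_max_of_le_right hb0, max_le_max hbmp' hbmp, ?_, ?_⟩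
        · exact max_le
            (le_min ((le_min_iff.1 hbm').1.trans (am1le x hx1))
              ((le_min_iff.1 hbm').2.trans (am1le y hy1)))
            (le_min ((le_min_iff.1 hbm).1.trans (am2le x hx2))
              ((le_min_iff.1 hbm).2.trans (am2le y hy2)))
        · exact max_le
            (le_min ((le_min_iff.1 hbp').1.trans (ap1le x hx1))
              ((le_min_iff.1 hbp').2.trans (ap1le y hy1)))
            (le_min ((le_min_iff.1 hbp).1.trans (ap2le x hx2))
              ((le_min_iff.1 hbp).2.trans (ap2le y hy2)))
      · simp only [h1xy, if_false]
        refine ⟨hb0, hbmp, ?_, ?_⟩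
        · exact le_min ((le_min_iff.1 hbm).1.trans (am2le x hx2))
            ((le_min_iff.1 hbm).2.trans (am2le y hy2))
        · exact le_min ((le_min_iff.1 hbp).1.trans (ap2le x hx2))
            ((le_min_iff.1 hbp).2.trans (ap2le y hy2))
end

section
/- Let G1*=(V1,E1) and G2*=(V2,E2) be crisp graphs with V1∩V2=∅, and let A1, A2, B1, B2 be interval-valued fuzzy subsets of V1, V2, E1, E2 respectively. Then (A1+A2, B1+B2) is an interval-valued fuzzy graph of the join G1*+G2* if and only if (A1,B1) and (A2,B2) are interval-valued fuzzy graphs of G1* and G2* respectively. -/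
open scoped Classical

/-- The join `G1* + G2*` of crisp graphs with vertex sets `V1, V2`:
edges of `G1*`, edges of `G2*`, and all edges between `V1` and `V2`. -/
def joinGraph {V : Type*} (V1 V2 : Set V) (G1 G2 : SimpleGraph V) : SimpleGraph V :=
  SimpleGraph.fromRel (fun x y => G1.Adj x y ∨ G2.Adj x y ∨ (x ∈ V1 ∧ y ∈ V2))

/-- For crisp graphs with disjoint vertex sets, the join of the interval-valued fuzzy
subsets is an interval-valued fuzzy graph of the join `G1* + G2*` iff both factors are
interval-valued fuzzy graphs. -/
theorem ivfg_join_iff {V : Type*} (V1 V2 : Set V) (G1 G2 : SimpleGraph V)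
    (am1 ap1 am2 ap2 : V → ℝ) (bm1 bp1 bm2 bp2 : V → V → ℝ)
    (hdisj : Disjoint V1 V2)
    (hV1 : ∀ x y, G1.Adj x y → x ∈ V1 ∧ y ∈ V1)
    (hV2 : ∀ x y, G2.Adj x y → x ∈ V2 ∧ y ∈ V2) :
    IsIVFG (V1 ∪ V2) (joinGraph V1 V2 G1 G2)
      (fun x => if x ∈ V1 then am1 x else am2 x)
      (fun x => if x ∈ V1 then ap1 x else ap2 x)
      (fun x y => if G1.Adj x y then bm1 x y
        else if G2.Adj x y then bm2 x y
        else if x ∈ V1 then min (am1 x) (am2 y) else min (am1 y) (am2 x))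
      (fun x y => if G1.Adj x y then bp1 x y
        else if G2.Adj x y then bp2 x y
        else if x ∈ V1 then min (ap1 x) (ap2 y) else min (ap1 y) (ap2 x))
    ↔ IsIVFG V1 G1 am1 ap1 bm1 bp1 ∧ IsIVFG V2 G2 am2 ap2 bm2 bp2 := by
  constructor
  · rintro ⟨hv, he⟩
    refine ⟨⟨fun x hx => ?_, fun x y hadj => ?_⟩, fun x hx => ?_, fun x y hadj => ?_⟩
    · simpa [hx] using hv x (Or.inl hx)
    · obtain ⟨hx1, hy1⟩ := hV1 x y hadj
      have hadj' : (joinGraph V1 V2 G1 G2).Adj x y := by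
        simp only [joinGraph, SimpleGraph.fromRel_adj]
        exact ⟨hadj.ne, Or.inl (Or.inl hadj)⟩
      simpa [hadj, hx1, hy1] using he x y hadj'
    · have hx1 : x ∉ V1 := fun h => Set.disjoint_left.mp hdisj h hx
      simpa [hx1] using hv x (Or.inr hx)
    · obtain ⟨hx2, hy2⟩ := hV2 x y hadj
      have hx1 : x ∉ V1 := fun h => Set.disjoint_left.mp hdisj h hx2
      have hy1 : y ∉ V1 := fun h => Set.disjoint_left.mp hdisj h hy2
      have hnG1 : ¬ G1.Adj x y := fun h => hx1 (hV1 x y h).1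
      have hadj' : (joinGraph V1 V2 G1 G2).Adj x y := by
        simp only [joinGraph, SimpleGraph.fromRel_adj]
        exact ⟨hadj.ne, Or.inl (Or.inr (Or.inl hadj))⟩
      simpa [hnG1, hadj, hx1, hy1] using he x y hadj'
  · rintro ⟨⟨hv1, he1⟩, hv2, he2⟩
    refine ⟨fun x hx => ?_, fun x y hadj => ?_⟩
    · rcases hx with hx | hx
      · simpa [hx] using hv1 x hx
      · have hx1 : x ∉ V1 := fun h => Set.disjoint_left.mp hdisj h hx
        simpa [hx1] using hv2 x hx
    · simp only [joinGraph, SimpleGraph.fromRel_adj] at hadj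
      obtain ⟨hne, h⟩ := hadj
      by_cases hG1 : G1.Adj x y
      · obtain ⟨hx1, hy1⟩ := hV1 x y hG1
        simpa [hG1, hx1, hy1] using he1 x y hG1
      by_cases hG2 : G2.Adj x y
      · obtain ⟨hx2, hy2⟩ := hV2 x y hG2
        have hx1 : x ∉ V1 := fun h => Set.disjoint_left.mp hdisj h hx2
        have hy1 : y ∉ V1 := fun h => Set.disjoint_left.mp hdisj h hy2
        simpa [hG1, hG2, hx1, hy1] using he2 x y hG2
      · have hcross : (x ∈ V1 ∧ y ∈ V2) ∨ (y ∈ V1 ∧ x ∈ V2) := by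
          rcases h with (h | h | h) | (h | h | h)
          · exact absurd h hG1
          · exact absurd h hG2
          · exact Or.inl h
          · exact absurd h.symm hG1
          · exact absurd h.symm hG2
          · exact Or.inr h
        rcases hcross with ⟨hx1, hy2⟩ | ⟨hy1, hx2⟩
        · have hy1 : y ∉ V1 := fun h => Set.disjoint_left.mp hdisj h hy2
          obtain ⟨h1a, h1b, h1c⟩ := hv1 x hx1
          obtain ⟨h2a, h2b, h2c⟩ := hv2 y hy2
          simp only [hG1, hG2, if_false, hx1, if_true, hy1]
          exact ⟨le_min h1a h2a, min_le_min h1b h2b, le_refl _, le_refl _⟩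
        · have hx1 : x ∉ V1 := fun h => Set.disjoint_left.mp hdisj h hx2
          obtain ⟨h1a, h1b, h1c⟩ := hv1 y hy1
          obtain ⟨h2a, h2b, h2c⟩ := hv2 x hx2
          simp only [hG1, hG2, if_false, hx1, hy1]
          exact ⟨le_min h1a h2a, min_le_min h1b h2b,
            le_of_eq (min_comm _ _), le_of_eq (min_comm _ _)⟩
end
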